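/- For m ∈ ℕ and 0 ≤ i ≤ n, one has (R_mG_i)^⋆ = ⟨p^{m−1}(1+σ+⋯+σ^{p^i−1})⟩ = ⟨p^{m−1}(σ−1)^{p^i−1}⟩, and this module is nonzero. -/

import Mathlib

open scoped BigOperators

/-- `U_i = 1 + p^i ℤ` as a subset of `ℤ`. -/
def Uset (p i : ℕ) : Set ℤ := {d : ℤ | ∃ k : ℤ, d = 1 + (p : ℤ) ^ i * k}

/-- `−U_i = {−u : u ∈ U_i}` as a subset of `ℤ`. -/
def negUset (p i : ℕ) : Set ℤ := {d : ℤ | -d ∈ Uset p i}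

/-- The coefficient ring `R_m = ℤ/p^mℤ`. -/
abbrev Rm (p m : ℕ) : Type := ZMod (p ^ m)

/-- The cyclic group of order `p^n`, written multiplicatively. -/
abbrev Cyc (p n : ℕ) : Type := Multiplicative (ZMod (p ^ n))

/-- The group ring `R_m G_n` of the cyclic group of order `p^n` over `ℤ/p^mℤ`. -/
abbrev RG (p m n : ℕ) : Type := MonoidAlgebra (Rm p m) (Cyc p n)

/-- The distinguished generator `σ` of the cyclic group of order `p^n`,
viewed as an element of the group ring `R_m G_n`. -/
noncomputable def sg (p m n : ℕ) : RG p m n :=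
  MonoidAlgebra.of (Rm p m) (Cyc p n) (Multiplicative.ofAdd (1 : ZMod (p ^ n)))

/-- The norm operator `P(i,j) = Σ_{k=0}^{p^{i-j}-1} σ^{k p^j}` in `R_m G_n`. -/
noncomputable def Pel (p m n i j : ℕ) : RG p m n :=
  ∑ k ∈ Finset.range (p ^ (i - j)), sg p m n ^ (k * p ^ j)

/-- The operator `Q_d(i,j) = Σ_{k=0}^{p^{i-j}-1} (d^{p^j})^{p^{i-j}-1-k} (σ^{p^j})^k` in `R_m G_n`. -/
noncomputable def Qel (p m n : ℕ) (d : ℤ) (i j : ℕ) : RG p m n :=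
  ∑ k ∈ Finset.range (p ^ (i - j)),
    ((d : RG p m n) ^ p ^ j) ^ (p ^ (i - j) - 1 - k) * sg p m n ^ (p ^ j * k)

/-- `p^a` for `a ∈ {−∞} ∪ ℕ`, with the convention `p^{−∞} = 0`. -/
def pexp (p : ℕ) (a : WithBot ℕ) : ℕ := WithBot.recBotCoe 0 (fun k => p ^ k) a

/-- `σ^{p^a}` for `a ∈ {−∞} ∪ ℕ`, with the convention `σ^{p^{−∞}} = 0`. -/
noncomputable def sigmaPow (p m n : ℕ) (a : WithBot ℕ) : RG p m n :=
  WithBot.recBotCoe 0 (fun k => sg p m n ^ p ^ k) a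

/-- `P(i,c)` for `c ∈ {−∞} ∪ ℕ`, with the convention `P(i,−∞) = 1`. -/
noncomputable def PelW (p m n i : ℕ) (c : WithBot ℕ) : RG p m n :=
  WithBot.recBotCoe 1 (fun k => Pel p m n i k) c

/-- The submodule of relations defining `X_{a,d,m}`: the free module on generators
`y = e 0` and `x_i = e (i+1)` modulo `(σ-d)y = Σ p^i x_i` and `σ^{p^{a_i}} x_i = x_i`
(where `σ^{p^{−∞}} x_i = 0`). -/
noncomputable def Xrel (p m n : ℕ) (a : ℕ → WithBot ℕ) (d : ℤ) :
    Submodule (RG p m n) (Fin (m + 1) → RG p m n) :=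
  Submodule.span (RG p m n)
    (insert
      ((sg p m n - (d : RG p m n)) •
          (Pi.single (0 : Fin (m + 1)) 1 : Fin (m + 1) → RG p m n) -
        ∑ i : Fin m, ((p : RG p m n) ^ (i : ℕ)) •
          (Pi.single i.succ 1 : Fin (m + 1) → RG p m n))
      (Set.range fun i : Fin m =>
        (sigmaPow p m n (a (i : ℕ)) - 1) •
          (Pi.single i.succ 1 : Fin (m + 1) → RG p m n)))

/-- The `R_m G`-module `X_{a,d,m}`. -/
abbrev Xmod (p m n : ℕ) (a : ℕ → WithBot ℕ) (d : ℤ) : Type :=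
  (Fin (m + 1) → RG p m n) ⧸ Xrel p m n a d

/-- The generator `y` of `X_{a,d,m}`. -/
noncomputable def Xy (p m n : ℕ) (a : ℕ → WithBot ℕ) (d : ℤ) : Xmod p m n a d :=
  Submodule.Quotient.mk (Pi.single (0 : Fin (m + 1)) 1 : Fin (m + 1) → RG p m n)

/-- The generator `x_i` of `X_{a,d,m}`. -/
noncomputable def Xx (p m n : ℕ) (a : ℕ → WithBot ℕ) (d : ℤ) (i : Fin m) : Xmod p m n a d :=
  Submodule.Quotient.mk (Pi.single i.succ 1 : Fin (m + 1) → RG p m n)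

/-- A module is indecomposable if it is nonzero and is not the direct sum of two
nonzero submodules. -/
def IsIndecomposableModule (R M : Type*) [Ring R] [AddCommGroup M] [Module R M] : Prop :=
  Nontrivial M ∧ ∀ V W : Submodule R M, IsCompl V W → V = ⊥ ∨ W = ⊥

/-- Hypotheses (I)–(V) of Theorem 1, together with the requirement
`a ∈ {−∞,0,1,…,n}^m`. -/
def Hyp (p n m : ℕ) (a : ℕ → WithBot ℕ) (d : ℤ) : Prop :=
  (∀ i < m, a i ≤ (n : WithBot ℕ)) ∧
  d ∈ Uset p 1 ∧
  (∀ i < m, d ^ pexp p (a i) ∈ Uset p (i + 1)) ∧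
  (∀ i j : ℕ, i < m → 1 ≤ j → i + j < m → a (i + j) ≠ ⊥ →
    ¬(p = 2 ∧ d ∉ Uset p 2 ∧ i = 0 ∧ a 0 = 0) →
    a i + (j : WithBot ℕ) < a (i + j)) ∧
  (p = 2 → d ∉ Uset p 2 → a 0 = 0 → ∀ j, 1 ≤ j → j < m → a j ≠ 0) ∧
  (p = 2 → n = 1 → a 0 = ⊥) ∧
  (∀ v : ℕ, p = 2 → 2 ≤ m → 2 ≤ v → d ∈ negUset p v → d ∉ negUset p (v + 1) →
    a 0 = 0 → ∀ i, v ≤ i → i < m → ((i - (v - 1) : ℕ) : WithBot ℕ) < a i ∧ a i ≠ ⊥)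

/-- The invariant `l(u)`: the dimension over `F_p` of the `F_p G`-submodule of `M/pM`
generated by the class of `u`; equivalently the least `k` with `(σ-1)^k u ∈ pM`. -/
noncomputable def ell (p m n : ℕ) {M : Type*} [AddCommGroup M] [Module (RG p m n) M]
    (u : M) : ℕ :=
  sInf {k : ℕ | ((sg p m n - 1) ^ k) • u ∈
    (Ideal.span {(p : RG p m n)} • (⊤ : Submodule (RG p m n) M) : Submodule (RG p m n) M)}

/-- `M^⋆ = {u ∈ M : (σ-1)u = 0 and pu = 0}`. -/
def Mstar (p m n : ℕ) (M : Type*) [AddCommGroup M] [Module (RG p m n) M] : Set M :=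
  {u : M | (sg p m n - 1) • u = 0 ∧ (p : RG p m n) • u = 0}
/-- The group ring `ℤG` of the cyclic group of order `p^n`. -/
abbrev ZG (p n : ℕ) : Type := MonoidAlgebra ℤ (Cyc p n)

/-- The generator `σ` as an element of `ℤG`. -/
noncomputable def sgZ (p n : ℕ) : ZG p n :=
  MonoidAlgebra.of ℤ (Cyc p n) (Multiplicative.ofAdd (1 : ZMod (p ^ n)))

/-- The norm operator `P(i,j)` as an element of `ℤG`. -/
noncomputable def PelZ (p n i j : ℕ) : ZG p n :=
  ∑ k ∈ Finset.range (p ^ (i - j)), sgZ p n ^ (k * p ^ j)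

/-- The additive map `φ_d : ℤG → ℤ` induced by `σ^t ↦ d^t` for `0 ≤ t < p^n`. -/
noncomputable def phiZ (p n : ℕ) (d : ℤ) (f : ZG p n) : ℤ :=
  ∑ t ∈ Finset.range (p ^ n), f.coeff (Multiplicative.ofAdd ((t : ℕ) : ZMod (p ^ n))) * d ^ t

/-- The map `φ_d^{(m)} : R_m G_n → R_m` induced by `σ^t ↦ d^t` for `0 ≤ t < p^n`. -/
noncomputable def phiM (p m n : ℕ) (d : ℤ) (f : RG p m n) : Rm p m :=
  ∑ t ∈ Finset.range (p ^ n), f.coeff (Multiplicative.ofAdd ((t : ℕ) : ZMod (p ^ n))) * (d : Rm p m) ^ t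

/-- The natural `R_m`-algebra homomorphism `χ_j : R_m G_i → R_m G_j` for `j ≤ i`. -/
noncomputable def chiMap (p m : ℕ) {i j : ℕ} (h : j ≤ i) : RG p m i →+* RG p m j :=
  MonoidAlgebra.mapDomainRingHom (Rm p m)
    (AddMonoidHom.toMultiplicative
      ((ZMod.castHom (pow_dvd_pow p h) (ZMod (p ^ j))).toAddMonoidHom))

/-- Coefficient reduction `R_m G_n → R_{m-1} G_n`. -/
noncomputable def barMap (p m n : ℕ) (f : RG p m n) : RG p (m - 1) n :=
  MonoidAlgebra.ofCoeff (Finsupp.mapRange (ZMod.castHom (pow_dvd_pow p (Nat.sub_le m 1)) (ZMod (p ^ (m - 1))))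
    (map_zero _) f.coeff)

/-- `W/p^{m-1}W` is a free `R_{m-1}G_k`-module: there is an additive isomorphism with
a finite power of `R_{m-1}G_k` intertwining the actions of `σ` (and hence of the
coefficients, which act through the additive group structure). -/
def QuotFree (p m n k : ℕ) {M : Type*} [AddCommGroup M] [Module (RG p m n) M]
    (W : Submodule (RG p m n) M) : Prop :=
  ∃ (r : ℕ) (e : (W ⧸ (Ideal.span {(p : RG p m n) ^ (m - 1)} •
      (⊤ : Submodule (RG p m n) W))) ≃+ (Fin r → RG p (m - 1) k)),
    ∀ q, e (sg p m n • q) = fun s => sg p (m - 1) k * e q s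
section Aux

variable (p m i : ℕ)

lemma sg_pow (k : ℕ) :
    sg p m i ^ k = MonoidAlgebra.single (Multiplicative.ofAdd ((k : ZMod (p ^ i)))) 1 := by
  rw [sg, MonoidAlgebra.of_apply, MonoidAlgebra.single_pow, one_pow]
  congr 1
  rw [← ofAdd_nsmul, nsmul_eq_mul, mul_one]

lemma sg_pow_card : sg p m i ^ (p ^ i) = 1 := by
  rw [sg_pow, ZMod.natCast_self]
  rfl

lemma Pel_eq : Pel p m i i 0 = ∑ k ∈ Finset.range (p ^ i), sg p m i ^ k := by
  simp [Pel]

lemma pel_apply (hp : p.Prime) (a : Cyc p i) : (Pel p m i i 0).coeff a = 1 := by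
  haveI : NeZero (p ^ i) := ⟨pow_ne_zero i hp.ne_zero⟩
  rw [Pel_eq, MonoidAlgebra.coeff_sum, Finset.sum_apply']
  simp only [sg_pow, MonoidAlgebra.coeff_single, Finsupp.single_apply]
  rw [Finset.sum_eq_single_of_mem (ZMod.val (Multiplicative.toAdd a))]
  · rw [if_pos]
    rw [ZMod.natCast_rightInverse _]
    exact (ofAdd_toAdd a)
  · exact Finset.mem_range.mpr (ZMod.val_lt _)
  · intro k hk hne
    rw [if_neg]
    intro h
    apply hne
    have h2 : ((k : ZMod (p ^ i))) = Multiplicative.toAdd a := by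
      rw [← toAdd_ofAdd ((k : ZMod (p^i))), h]
    rw [← h2, ZMod.val_cast_of_lt (Finset.mem_range.mp hk)]

lemma natCast_pow_RG (t : ℕ) :
    (p : RG p m i) ^ t = MonoidAlgebra.single (1 : Cyc p i) ((p : Rm p m) ^ t) := by
  rw [MonoidAlgebra.natCast_def, MonoidAlgebra.single_pow, one_pow]

lemma single_one_mul_apply (c : Rm p m) (x : RG p m i) (a : Cyc p i) :
    (MonoidAlgebra.single (1 : Cyc p i) c * x).coeff a = c * x.coeff a := by
  rw [MonoidAlgebra.coeff_single_mul_apply, inv_one, one_mul]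

end Aux

section Const
variable (p m i : ℕ)

lemma const_of_sg_fix (hp : p.Prime) {u : RG p m i} (h : (sg p m i - 1) * u = 0)
    (a : Cyc p i) : u.coeff a = u.coeff 1 := by
  haveI : NeZero (p ^ i) := ⟨pow_ne_zero i hp.ne_zero⟩
  have h1 : sg p m i * u = u := by
    have h' : sg p m i * u - u = 0 := by
      rw [← h, sub_mul, one_mul]
    exact sub_eq_zero.mp h'
  have hfix : ∀ z : ZMod (p ^ i),
      u.coeff (Multiplicative.ofAdd (z - 1)) = u.coeff (Multiplicative.ofAdd z) := by
    intro z
    have h2 := congrFun (congrArg (fun f : RG p m i => (f.coeff : Cyc p i → Rm p m)) h1)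
      (Multiplicative.ofAdd z)
    simp only [sg, MonoidAlgebra.of_apply] at h2
    rw [MonoidAlgebra.coeff_single_mul_apply, one_mul] at h2
    rw [← h2]
    congr 1
    rw [← ofAdd_neg, ← ofAdd_add]
    congr 1
    ring
  have key : ∀ k : ℕ, ∀ z : ZMod (p ^ i),
      u.coeff (Multiplicative.ofAdd (z - (k : ZMod (p ^ i)))) = u.coeff (Multiplicative.ofAdd z) := by
    intro k
    induction k with
    | zero => intro z; norm_num
    | succ k ih =>
      intro z
      have e1 : z - ((k + 1 : ℕ) : ZMod (p ^ i)) = (z - (k : ZMod (p ^ i))) - 1 := by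
        push_cast; ring
      rw [e1, hfix, ih]
  have hz := key (ZMod.val (Multiplicative.toAdd a)) (Multiplicative.toAdd a)
  rw [ZMod.natCast_rightInverse _, sub_self, ofAdd_toAdd] at hz
  rw [← hz, ofAdd_zero]
end Const

section Red
variable (p m i : ℕ)

noncomputable def redMap (hm : 1 ≤ m) : RG p m i →+* MonoidAlgebra (ZMod p) (Cyc p i) :=
  MonoidAlgebra.liftNCRingHom
    ((MonoidAlgebra.singleOneRingHom).comp
      (ZMod.castHom (dvd_pow_self p (Nat.one_le_iff_ne_zero.mp hm)) (ZMod p)))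
    (MonoidAlgebra.of (ZMod p) (Cyc p i))
    (fun _ _ => Commute.all _ _)

lemma redMap_single (hm : 1 ≤ m) (a : Cyc p i) (b : Rm p m) :
    redMap p m i hm (MonoidAlgebra.single a b) =
      MonoidAlgebra.single a
        (ZMod.castHom (dvd_pow_self p (Nat.one_le_iff_ne_zero.mp hm)) (ZMod p) b) := by
  simp only [redMap, MonoidAlgebra.liftNCRingHom]
  show MonoidAlgebra.liftNC _ _ (MonoidAlgebra.single a b) = _
  rw [MonoidAlgebra.liftNC_single]
  simp only [RingHom.coe_comp, Function.comp_apply, MonoidAlgebra.singleOneRingHom,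
    MonoidAlgebra.of_apply]
  show MonoidAlgebra.single 1 _ * MonoidAlgebra.single a 1 = _
  rw [MonoidAlgebra.single_mul_single, one_mul, mul_one]

lemma redMap_apply (hm : 1 ≤ m) (x : RG p m i) (c : Cyc p i) :
    (redMap p m i hm x).coeff c =
      ZMod.castHom (dvd_pow_self p (Nat.one_le_iff_ne_zero.mp hm)) (ZMod p) (x.coeff c) := by
  induction x using MonoidAlgebra.induction_linear with
  | zero => simp
  | add f g hf hg =>
    rw [map_add]
    show (_ + _ : MonoidAlgebra (ZMod p) (Cyc p i)).coeff c = _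
    rw [MonoidAlgebra.coeff_add, Finsupp.add_apply]
    show _ = ZMod.castHom _ _ ((f + g).coeff c)
    rw [MonoidAlgebra.coeff_add, Finsupp.add_apply, map_add, hf, hg]
  | single a b =>
    rw [redMap_single]
    show Finsupp.single a _ c = ZMod.castHom _ _ (Finsupp.single a b c)
    rw [Finsupp.single_apply, Finsupp.single_apply, apply_ite (ZMod.castHom _ (ZMod p)),
      map_zero]

lemma pow_pm1_mul_eq_zero (hp : p.Prime) (hm : 1 ≤ m) (x : RG p m i)
    (h : redMap p m i hm x = 0) : (p : RG p m i) ^ (m - 1) * x = 0 := by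
  haveI : NeZero p := ⟨hp.ne_zero⟩
  haveI : NeZero (p ^ m) := ⟨pow_ne_zero m hp.ne_zero⟩
  ext a
  rw [natCast_pow_RG, single_one_mul_apply]
  have hc : ZMod.castHom (dvd_pow_self p (Nat.one_le_iff_ne_zero.mp hm)) (ZMod p) (x.coeff a) = 0 := by
    rw [← redMap_apply (hm := hm), h]; rfl
  rw [ZMod.castHom_apply, ZMod.cast_eq_val, ZMod.natCast_eq_zero_iff] at hc
  obtain ⟨y, hy⟩ := hc
  have hxa : x.coeff a = (((x.coeff a).val : ℕ) : Rm p m) := (ZMod.natCast_rightInverse _).symm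
  rw [hxa, hy]
  have h1 : ((p : Rm p m)) ^ m = 0 := by
    have := ZMod.natCast_self (p ^ m)
    push_cast at this
    exact this
  show (p : Rm p m) ^ (m - 1) * ((p * y : ℕ) : Rm p m) = (0 : RG p m i).coeff a
  have h2 : (0 : RG p m i).coeff a = 0 := rfl
  rw [h2]
  push_cast
  have hm' : m - 1 + 1 = m := Nat.succ_pred_eq_of_pos hm
  calc (p : Rm p m) ^ (m - 1) * ((p : Rm p m) * (y : Rm p m))
      = (p : Rm p m) ^ (m - 1 + 1) * (y : Rm p m) := by rw [pow_succ]; ring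
    _ = (p : Rm p m) ^ m * (y : Rm p m) := by rw [hm']
    _ = 0 := by rw [h1, zero_mul]

lemma frob_identity (hp : p.Prime) :
    (MonoidAlgebra.of (ZMod p) (Cyc p i) (Multiplicative.ofAdd 1) - 1) ^ (p ^ i - 1) =
      ∑ k ∈ Finset.range (p ^ i),
        MonoidAlgebra.of (ZMod p) (Cyc p i) (Multiplicative.ofAdd 1) ^ k := by
  haveI := Fact.mk hp
  haveI : CharP (Polynomial (ZMod p)) p :=
    charP_of_injective_ringHom (Polynomial.C_injective) p
  have hq : 0 < p ^ i := pow_pos hp.pos i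
  have hXne : (Polynomial.X : Polynomial (ZMod p)) - 1 ≠ 0 := by
    rw [← Polynomial.C_1]
    exact Polynomial.X_sub_C_ne_zero 1
  have hpoly : ((Polynomial.X : Polynomial (ZMod p)) - 1) ^ (p ^ i - 1) =
      ∑ k ∈ Finset.range (p ^ i), (Polynomial.X : Polynomial (ZMod p)) ^ k := by
    apply mul_right_cancel₀ hXne
    rw [geom_sum_mul, ← pow_succ, Nat.sub_add_cancel hq]
    rw [sub_pow_char_pow, one_pow]
  have := congrArg (Polynomial.aeval
    (MonoidAlgebra.of (ZMod p) (Cyc p i) (Multiplicative.ofAdd 1))) hpoly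
  simpa only [map_sub, map_pow, map_sum, Polynomial.aeval_X, map_one] using this

lemma pm1_claim2 (hp : p.Prime) (hm : 1 ≤ m) :
    (p : RG p m i) ^ (m - 1) * (sg p m i - 1) ^ (p ^ i - 1) =
      (p : RG p m i) ^ (m - 1) * Pel p m i i 0 := by
  have hsg : redMap p m i hm (sg p m i) =
      MonoidAlgebra.of (ZMod p) (Cyc p i) (Multiplicative.ofAdd 1) := by
    rw [sg, MonoidAlgebra.of_apply, redMap_single, MonoidAlgebra.of_apply]
    congr 1
    exact map_one _
  have h0 : redMap p m i hm ((sg p m i - 1) ^ (p ^ i - 1) - Pel p m i i 0) = 0 := by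
    rw [map_sub, map_pow, map_sub, map_one, hsg, Pel_eq, map_sum]
    simp only [map_pow, hsg]
    rw [frob_identity p i hp, sub_self]
  have := pow_pm1_mul_eq_zero p m i hp hm _ h0
  rw [mul_sub] at this
  exact sub_eq_zero.mp this
end Red


/-- Lemma 3.4 (`le:starrmgi`). -/
theorem star_of_RmGi (p n m : ℕ) (hp : p.Prime) (hm : 1 ≤ m) (i : ℕ) (hin : i ≤ n) :
    Mstar p m i (RG p m i) =
      ↑(Ideal.span {(p : RG p m i) ^ (m - 1) * Pel p m i i 0}) ∧
    Mstar p m i (RG p m i) =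
      ↑(Ideal.span {(p : RG p m i) ^ (m - 1) * (sg p m i - 1) ^ (p ^ i - 1)}) ∧
    (Ideal.span {(p : RG p m i) ^ (m - 1) * Pel p m i i 0} : Ideal (RG p m i)) ≠ ⊥ := by
  haveI : NeZero p := ⟨hp.ne_zero⟩
  haveI : NeZero (p ^ m) := ⟨pow_ne_zero m hp.ne_zero⟩
  have hm' : m - 1 + 1 = m := Nat.succ_pred_eq_of_pos hm
  have hNgeom : (sg p m i - 1) * Pel p m i i 0 = 0 := by
    rw [Pel_eq, mul_comm, geom_sum_mul, sg_pow_card, sub_self]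
  have hpm : (p : RG p m i) ^ m = 0 := by
    rw [natCast_pow_RG]
    have h1 : ((p : Rm p m)) ^ m = 0 := by
      have := ZMod.natCast_self (p ^ m)
      push_cast at this
      exact this
    rw [h1]
    exact MonoidAlgebra.single_zero _
  have main1 : Mstar p m i (RG p m i) =
      ↑(Ideal.span {(p : RG p m i) ^ (m - 1) * Pel p m i i 0}) := by
    ext u
    simp only [Mstar, Set.mem_setOf_eq, SetLike.mem_coe, smul_eq_mul]
    constructor
    · rintro ⟨h1, h2⟩
      have hu : u = MonoidAlgebra.single (1 : Cyc p i) (u.coeff 1) * Pel p m i i 0 := by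
        ext a
        rw [single_one_mul_apply, pel_apply p m i hp, mul_one,
          const_of_sg_fix p m i hp h1 a]
      have hpc : (p : Rm p m) * u.coeff 1 = 0 := by
        have h3 : ((p : RG p m i) * u).coeff 1 = (p : Rm p m) * u.coeff 1 := by
          rw [MonoidAlgebra.natCast_def, single_one_mul_apply]
        calc (p : Rm p m) * u.coeff 1 = ((p : RG p m i) * u).coeff 1 := h3.symm
          _ = (0 : RG p m i).coeff 1 := by rw [h2]
          _ = 0 := rfl
      have hdvd : p ^ m ∣ p * (u.coeff 1).val := by
        rw [← ZMod.natCast_eq_zero_iff]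
        push_cast
        rw [ZMod.natCast_val, ZMod.cast_id]
        exact hpc
      obtain ⟨y, hy⟩ := hdvd
      have hval : (u.coeff 1).val = p ^ (m - 1) * y := by
        apply Nat.eq_of_mul_eq_mul_left hp.pos
        rw [hy, show p ^ m = p ^ (m - 1) * p from by rw [← pow_succ, hm']]
        ring
      have hc : u.coeff 1 = (p : Rm p m) ^ (m - 1) * (y : Rm p m) := by
        calc u.coeff 1 = (((u.coeff 1).val : ℕ) : Rm p m) := (ZMod.natCast_rightInverse _).symm
          _ = ((p ^ (m - 1) * y : ℕ) : Rm p m) := by rw [hval]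
          _ = (p : Rm p m) ^ (m - 1) * (y : Rm p m) := by push_cast; ring
      rw [Ideal.mem_span_singleton']
      refine ⟨MonoidAlgebra.single (1 : Cyc p i) (y : Rm p m), ?_⟩
      rw [natCast_pow_RG, ← mul_assoc, MonoidAlgebra.single_mul_single, one_mul]
      rw [hu, hc]
      congr 1
      congr 1
      rw [mul_comm]
    · intro hmem
      rw [Ideal.mem_span_singleton'] at hmem
      obtain ⟨v, hv⟩ := hmem
      rw [← hv]
      constructor
      · calc (sg p m i - 1) * (v * ((p : RG p m i) ^ (m - 1) * Pel p m i i 0))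
            = v * (p : RG p m i) ^ (m - 1) * ((sg p m i - 1) * Pel p m i i 0) := by ring
          _ = 0 := by rw [hNgeom, mul_zero]
      · calc (p : RG p m i) * (v * ((p : RG p m i) ^ (m - 1) * Pel p m i i 0))
            = v * ((p : RG p m i) ^ (m - 1) * (p : RG p m i)) * Pel p m i i 0 := by ring
          _ = v * (p : RG p m i) ^ (m - 1 + 1) * Pel p m i i 0 := by rw [pow_succ]
          _ = v * (p : RG p m i) ^ m * Pel p m i i 0 := by rw [hm']
          _ = 0 := by rw [hpm, mul_zero, zero_mul]
  refine ⟨main1, ?_, ?_⟩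
  · rw [pm1_claim2 p m i hp hm]
    exact main1
  · rw [Ne, Ideal.span_singleton_eq_bot]
    intro h0
    have he1 : ((p : RG p m i) ^ (m - 1) * Pel p m i i 0).coeff 1 = (p : Rm p m) ^ (m - 1) := by
      rw [natCast_pow_RG, single_one_mul_apply, pel_apply p m i hp, mul_one]
    have hne : ((p ^ (m - 1) : ℕ) : Rm p m) ≠ 0 := by
      rw [Ne, ZMod.natCast_eq_zero_iff]
      intro hdvd
      have hle := Nat.le_of_dvd (pow_pos hp.pos (m - 1)) hdvd
      have hlt : p ^ (m - 1) < p ^ m :=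
        Nat.pow_lt_pow_right hp.one_lt (by omega)
      omega
    apply hne
    push_cast
    rw [← he1, h0]
    rfl
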